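/- Let n ≥ 4 be an integer. Let K_{6n} be given a red/blue edge-coloring that is (F_n, K_4)-free and suppose its vertex set is partitioned into three pairwise disjoint red cliques G_1, G_2, G_3 each of order 2n. Let w be a new vertex joined to some vertices of K_{6n} with red/blue colored edges such that the resulting coloring is still (F_n, K_4)-free. Then for each i ∈ {1,2,3}, the vertex w is joined by a red edge to at most one vertex of G_i. -/

import Mathlib

open SimpleGraph

/-- The fan graph `Fₙ`: the join of a single vertex (the center, `none`) with `n`
pairwise disjoint edges (`some (i, a)` is matched with `some (i, !a)`). -/
def Fan (n : ℕ) : SimpleGraph (Option (Fin n × Bool)) where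
  Adj u v := u ≠ v ∧ (u = none ∨ v = none ∨ ∃ i a b, u = some (i, a) ∧ v = some (i, b))
  symm := by
    refine ⟨?_⟩
    rintro u v ⟨h1, h2⟩
    exact ⟨h1.symm, by tauto⟩
  loopless := by refine ⟨?_⟩; rintro u ⟨h1, -⟩; exact h1 rfl

/-- `G` contains a subgraph isomorphic to the fan graph `Fₙ`. -/
def ContainsFan {V : Type*} (G : SimpleGraph V) (n : ℕ) : Prop :=
  ∃ f : Option (Fin n × Bool) ↪ V, ∀ u v, (Fan n).Adj u v → G.Adj (f u) (f v)

/-- `G` contains a subgraph isomorphic to `K₄`. -/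
def ContainsK4 {V : Type*} (G : SimpleGraph V) : Prop :=
  ∃ a b c d : V, G.Adj a b ∧ G.Adj a c ∧ G.Adj a d ∧ G.Adj b c ∧ G.Adj b d ∧ G.Adj c d

/-- Extend a graph on `V` by one extra vertex (`none`) joined to the set `S`. -/
def extendGraph {V : Type*} (G : SimpleGraph V) (S : Set V) : SimpleGraph (Option V) where
  Adj u v :=
    match u, v with
    | some a, some b => G.Adj a b
    | none, some a => a ∈ S
    | some a, none => a ∈ S
    | none, none => False
  symm := by refine ⟨?_⟩; rintro (_ | a) (_ | b) h <;> first | exact h | exact G.adj_symm h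
  loopless := by refine ⟨?_⟩; rintro (_ | a) h; exacts [h, G.irrefl h]

/-- Let `K_{6n}` carry an `(Fₙ, K₄)`-free coloring partitioned into three red
cliques `G 0, G 1, G 2` of order `2n`, and extend it by a new vertex `w` with red
neighbors `RedN` and blue neighbors `BlueN`, still `(Fₙ, K₄)`-free. Then `w` has at
most one red neighbor in each `G i`. -/
theorem at_most_one_red_per_part (n : ℕ) (hn : 4 ≤ n)
    (R : SimpleGraph (Fin (6 * n)))
    (hfree : ¬ ContainsFan R n ∧ ¬ ContainsK4 Rᶜ)
    (G : Fin 3 → Finset (Fin (6 * n)))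
    (hcard : ∀ i, (G i).card = 2 * n)
    (hdisj : ∀ i j, i ≠ j → Disjoint (G i) (G j))
    (hcover : ∀ v, ∃ i, v ∈ G i)
    (hclique : ∀ i, R.IsClique ↑(G i))
    (RedN BlueN : Finset (Fin (6 * n))) (hdisjN : Disjoint RedN BlueN)
    (hfree' : ¬ ContainsFan (extendGraph R ↑RedN) n ∧
      ¬ ContainsK4 (extendGraph Rᶜ ↑BlueN)) :
    ∀ i, (RedN ∩ G i).card ≤ 1 := by
  intro i
  by_contra h
  push_neg at h
  obtain ⟨x, hx, y, hy, hxy⟩ := Finset.one_lt_card.mp h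
  simp only [Finset.mem_inter] at hx hy
  apply hfree'.1
  have hyx : y ∈ (G i).erase x := Finset.mem_erase.mpr ⟨Ne.symm hxy, hy.2⟩
  set S := ((G i).erase x).erase y with hSdef
  have hScard : S.card = 2 * (n - 1) := by
    rw [hSdef, Finset.card_erase_of_mem hyx, Finset.card_erase_of_mem hx.2, hcard]
    omega
  let e : Fin (2 * (n - 1)) ≃ {v // v ∈ S} := (S.equivFinOfCardEq hScard).symm
  have heS : ∀ k, (e k : Fin (6 * n)) ∈ S := fun k => (e k).2
  have heG : ∀ k, (e k : Fin (6 * n)) ∈ G i := fun k =>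
    Finset.mem_of_mem_erase (Finset.mem_of_mem_erase (heS k))
  have hex : ∀ k, (e k : Fin (6 * n)) ≠ x := fun k =>
    Finset.ne_of_mem_erase (Finset.mem_of_mem_erase (heS k))
  have hey : ∀ k, (e k : Fin (6 * n)) ≠ y := fun k =>
    Finset.ne_of_mem_erase (heS k)
  have heinj : ∀ k k', (e k : Fin (6 * n)) = e k' → k = k' := by
    intro k k' hkk'
    exact e.injective (Subtype.ext hkk')
  let g : Option (Fin n × Bool) → Option (Fin (6 * n)) := fun u =>
    match u with
    | none => some x
    | some (k, b) =>
      if hk : (k : ℕ) = 0 then (if b then none else some y)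
      else some (e ⟨2 * ((k : ℕ) - 1) + b.toNat,
        by have h1 := k.isLt; have h2 := Bool.toNat_lt b; omega⟩)
  have hginj : Function.Injective g := by
    rintro (_ | ⟨k, b⟩) (_ | ⟨k', b'⟩) hguv
    · rfl
    · exfalso
      by_cases hk : (k' : ℕ) = 0
      · simp only [g, dif_pos hk] at hguv
        cases b' <;> simp at hguv
        exact hxy hguv
      · simp only [g, dif_neg hk] at hguv
        simp at hguv
        exact hex _ hguv.symm
    · exfalso
      by_cases hk : (k : ℕ) = 0
      · simp only [g, dif_pos hk] at hguv
        cases b <;> simp at hguv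
        exact hxy hguv.symm
      · simp only [g, dif_neg hk] at hguv
        simp at hguv
        exact hex _ hguv
    · by_cases hk : (k : ℕ) = 0 <;> by_cases hk' : (k' : ℕ) = 0
      · have hkk : k = k' := Fin.ext (hk.trans hk'.symm)
        subst hkk
        simp only [g, dif_pos hk] at hguv
        cases b <;> cases b' <;> simp_all
      · exfalso
        simp only [g, dif_pos hk, dif_neg hk'] at hguv
        cases b <;> simp at hguv
        exact hey _ hguv.symm
      · exfalso
        simp only [g, dif_neg hk, dif_pos hk'] at hguv
        cases b' <;> simp at hguv
        exact hey _ hguv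
      · simp only [g, dif_neg hk, dif_neg hk', Option.some.injEq] at hguv
        have hval : 2 * ((k : ℕ) - 1) + b.toNat
            = 2 * ((k' : ℕ) - 1) + b'.toNat :=
          congrArg Fin.val (heinj _ _ hguv)
        have hb : b = b' := by
          cases b <;> cases b' <;> simp only [Bool.toNat_true, Bool.toNat_false] at hval <;>
            first | rfl | omega
        subst hb
        have hkk : k = k' := Fin.ext (by omega)
        rw [hkk]
  refine ⟨⟨g, hginj⟩, ?_⟩
  have adjR : ∀ a b : Fin (6 * n), R.Adj a b →
      (extendGraph R ↑RedN).Adj (some a) (some b) := fun a b hab => hab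
  have adjW : ∀ a : Fin (6 * n), a ∈ RedN →
      (extendGraph R ↑RedN).Adj (some a) none := fun a ha => Finset.mem_coe.mpr ha
  have main : ∀ (k : Fin n) (b : Bool),
      (extendGraph R ↑RedN).Adj (g none) (g (some (k, b))) := by
    intro k b
    show (extendGraph R ↑RedN).Adj (some x) (g (some (k, b)))
    by_cases hk0 : (k : ℕ) = 0
    · simp only [g, dif_pos hk0]
      cases b
      · simp only [Bool.false_eq_true, if_false]
        exact adjR _ _ (hclique i hx.2 hy.2 hxy)
      · simp only [if_true]
        exact adjW _ hx.1
    · simp only [g, dif_neg hk0]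
      exact adjR _ _ (hclique i hx.2 (heG _) (Ne.symm (hex _)))
  rintro u v ⟨hne, hor⟩
  obtain (_ | ⟨k, b⟩) := u <;> obtain (_ | ⟨k', b'⟩) := v
  · exact absurd rfl hne
  · exact main k' b'
  · exact (main k b).symm
  · rcases hor with h | h | ⟨j, a1, a2, h1, h2⟩
    · exact absurd h (by simp)
    · exact absurd h (by simp)
    · injection h1 with h1'
      injection h2 with h2'
      have hkj : k = j := congrArg Prod.fst h1'
      have hk'j : k' = j := congrArg Prod.fst h2'
      have hbb : b ≠ b' := fun hb => hne (by rw [hb, hk'j.trans hkj.symm])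
      show (extendGraph R ↑RedN).Adj (g (some (k, b))) (g (some (k', b')))
      rw [show k' = k from hk'j.trans hkj.symm]
      by_cases hk0 : (k : ℕ) = 0
      · simp only [g, dif_pos hk0]
        cases b <;> cases b'
        · exact absurd rfl hbb
        · exact adjW _ hy.1
        · exact (adjW _ hy.1).symm
        · exact absurd rfl hbb
      · simp only [g, dif_neg hk0]
        refine adjR _ _ (hclique i (heG _) (heG _) ?_)
        intro heq
        exact hbb (by
          have := heinj _ _ heq
          have hv2 : 2 * ((k : ℕ) - 1) + b.toNat = 2 * ((k : ℕ) - 1) + b'.toNat :=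
            congrArg Fin.val this
          cases b <;> cases b' <;> simp only [Bool.toNat_true, Bool.toNat_false] at hv2 <;>
            first | rfl | omega)
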